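/- Let g ⊆ gl(V) be a Lie subalgebra with first prolongation g^(1) := (V* ⊗ g) ∩ (S²(V*) ⊗ V), and define g_underlined := span{r(x) : x ∈ V, r ∈ g^(1)} ⊆ g. If W ⊆ V is a g-invariant subspace and g_underlined = g, then the induced representation g_{/W} ⊆ gl(V/W) satisfies (g_{/W})_underlined = g_{/W}; i.e., the property of being spanned by evaluations of the first prolongation passes to quotient representations. -/

import Mathlib

attribute [local instance 100] LieRing.ofAssociativeRing

theorem stmt_13 (V : Type*) [AddCommGroup V] [Module ℝ V] [FiniteDimensional ℝ V]
    (g : LieSubalgebra ℝ (Module.End ℝ V))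
    (hspan : Submodule.span ℝ {B : Module.End ℝ V |
        ∃ r : V →ₗ[ℝ] Module.End ℝ V,
          (∀ x y, r x y = r y x) ∧ (∀ x, r x ∈ g) ∧ ∃ x, B = r x}
      = g.toSubmodule)
    (W : Submodule ℝ V) (hW : ∀ A ∈ g, ∀ w ∈ W, A w ∈ W)
    (gQ : Submodule ℝ (Module.End ℝ (V ⧸ W)))
    (hgQ : gQ = Submodule.map (W.mapQLinear W)
      (Submodule.comap (Submodule.compatibleMaps W W).subtype g.toSubmodule)) :
    Submodule.span ℝ {B : Module.End ℝ (V ⧸ W) |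
        ∃ r : (V ⧸ W) →ₗ[ℝ] Module.End ℝ (V ⧸ W),
          (∀ x y, r x y = r y x) ∧ (∀ x, r x ∈ gQ) ∧ ∃ x, B = r x}
      = gQ := by
  set S' := {B : Module.End ℝ (V ⧸ W) |
        ∃ r : (V ⧸ W) →ₗ[ℝ] Module.End ℝ (V ⧸ W),
          (∀ x y, r x y = r y x) ∧ (∀ x, r x ∈ gQ) ∧ ∃ x, B = r x} with hS'
  apply le_antisymm
  · rw [Submodule.span_le]
    rintro B ⟨r, -, hmem, x, rfl⟩
    exact hmem x
  · rw [hgQ]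
    rintro B ⟨f, hf, rfl⟩
    -- hf : (f : End V) ∈ g
    have key : ∀ A : Module.End ℝ V, A ∈ g.toSubmodule →
        ∃ h : A ∈ Submodule.compatibleMaps W W,
          W.mapQLinear W ⟨A, h⟩ ∈ Submodule.span ℝ S' := by
      intro A hA
      rw [← hspan] at hA
      induction hA using Submodule.span_induction with
      | mem A hAS =>
        obtain ⟨r, hsym, hg, x, rfl⟩ := hAS
        have compat : ∀ z, r z ∈ Submodule.compatibleMaps W W := fun z w hw =>
          hW (r z) (hg z) w hw
        refine ⟨compat x, ?_⟩
        set ψ : V →ₗ[ℝ] (Submodule.compatibleMaps W W : Submodule ℝ _) :=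
          r.codRestrict _ compat with hψ
        set φ : V →ₗ[ℝ] Module.End ℝ (V ⧸ W) := (W.mapQLinear W).comp ψ with hφ
        have hφapp : ∀ u v : V, φ u (Submodule.Quotient.mk v)
            = Submodule.Quotient.mk (r u v) := fun u v => rfl
        have hker : W ≤ LinearMap.ker φ := by
          intro w hw
          rw [LinearMap.mem_ker]
          refine LinearMap.ext fun z => ?_
          obtain ⟨v, rfl⟩ := Submodule.Quotient.mk_surjective W z
          rw [hφapp, LinearMap.zero_apply]
          rw [Submodule.Quotient.mk_eq_zero]
          rw [hsym w v]
          exact hW (r v) (hg v) w hw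
        set rQ : (V ⧸ W) →ₗ[ℝ] Module.End ℝ (V ⧸ W) := W.liftQ φ hker with hrQ
        have hrQapp : ∀ u : V, rQ (Submodule.Quotient.mk u) = φ u := fun u => rfl
        apply Submodule.subset_span
        refine ⟨rQ, ?_, ?_, Submodule.Quotient.mk x, rfl⟩
        · intro a b
          obtain ⟨u, rfl⟩ := Submodule.Quotient.mk_surjective W a
          obtain ⟨v, rfl⟩ := Submodule.Quotient.mk_surjective W b
          rw [hrQapp, hrQapp, hφapp, hφapp, hsym]
        · intro a
          obtain ⟨u, rfl⟩ := Submodule.Quotient.mk_surjective W a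
          rw [hrQapp, hgQ]
          exact ⟨⟨r u, compat u⟩, hg u, rfl⟩
      | zero =>
        refine ⟨Submodule.zero_mem _, ?_⟩
        have : (⟨0, Submodule.zero_mem _⟩ :
            (Submodule.compatibleMaps W W : Submodule ℝ _)) = 0 := rfl
        rw [this, map_zero]
        exact Submodule.zero_mem _
      | add x y hx hy ihx ihy =>
        obtain ⟨hx', px⟩ := ihx
        obtain ⟨hy', py⟩ := ihy
        refine ⟨Submodule.add_mem _ hx' hy', ?_⟩
        have : (⟨x + y, Submodule.add_mem _ hx' hy'⟩ :
            (Submodule.compatibleMaps W W : Submodule ℝ _)) = ⟨x, hx'⟩ + ⟨y, hy'⟩ := rfl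
        rw [this, map_add]
        exact Submodule.add_mem _ px py
      | smul a x hx ihx =>
        obtain ⟨hx', px⟩ := ihx
        refine ⟨Submodule.smul_mem _ a hx', ?_⟩
        have : (⟨a • x, Submodule.smul_mem _ a hx'⟩ :
            (Submodule.compatibleMaps W W : Submodule ℝ _)) = a • ⟨x, hx'⟩ := rfl
        rw [this, map_smul]
        exact Submodule.smul_mem _ a px
    obtain ⟨h, hm⟩ := key f.1 hf
    have : f = ⟨f.1, h⟩ := rfl
    rw [this]
    exact hm
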